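/- (Determinant identity, case N = 2.) For arbitrary complex numbers λ₁, λ₂, μ₁, μ₂, η, κ such that all the functions below are defined (nonvanishing sinh denominators, and sinh(λ₁−λ₂±η) ≠ 0, sinh(μ₁−μ₂±η) ≠ 0), the 2×2 determinants of the matrices G̃_{jk} = t(μₖ,λⱼ)·Π_{a=1}^{2} h(μ_a,λⱼ) + κ·t(λⱼ,μₖ)·Π_{a=1}^{2} h(λⱼ,μ_a)·Π_{a=1}^{2} [h(λ_a,λⱼ)/h(λⱼ,λ_a)] and Ĝ_{jk} = t(μₖ,λⱼ)·Π_{a=1}^{2} h(μₖ,λ_a) + κ·t(λⱼ,μₖ)·Π_{a=1}^{2} h(λ_a,μₖ)·Π_{a=1}^{2} [h(μₖ,μ_a)/h(μ_a,μₖ)] are equal: det G̃ = det Ĝ. -/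

import Mathlib

open Complex

/-- `h(λ,μ) = sinh(λ-μ+η)`. -/
noncomputable def hfun (η lam mu : ℂ) : ℂ := Complex.sinh (lam - mu + η)

/-- `t(λ,μ) = sinh η / (sinh(λ-μ) · h(λ,μ))`. -/
noncomputable def tfun (η lam mu : ℂ) : ℂ :=
  Complex.sinh η / (Complex.sinh (lam - mu) * hfun η lam mu)

lemma sinh_eq' (z : ℂ) : Complex.sinh z = (Complex.exp z - Complex.exp (-z)) / 2 := rfl

set_option maxHeartbeats 2000000 in
lemma key1 (η κ l0 l1 m0 m1 : ℂ) :
    Complex.sinh η ^ 2 * Complex.sinh (m0 - m1 + η) * Complex.sinh (m1 - m0 + η) *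
      (Complex.sinh (m1 - l0) * Complex.sinh (m0 - l1) *
        (Complex.sinh (m1 - l0 + η) * Complex.sinh (l0 - l1 + η) - κ * Complex.sinh (l0 - m1 + η) * Complex.sinh (l1 - l0 + η)) *
        (Complex.sinh (m0 - l1 + η) * Complex.sinh (l1 - l0 + η) - κ * Complex.sinh (l1 - m0 + η) * Complex.sinh (l0 - l1 + η))
      - Complex.sinh (m0 - l0) * Complex.sinh (m1 - l1) *
        (Complex.sinh (m0 - l0 + η) * Complex.sinh (l0 - l1 + η) - κ * Complex.sinh (l0 - m0 + η) * Complex.sinh (l1 - l0 + η)) *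
        (Complex.sinh (m1 - l1 + η) * Complex.sinh (l1 - l0 + η) - κ * Complex.sinh (l1 - m1 + η) * Complex.sinh (l0 - l1 + η)))
    =
    Complex.sinh η ^ 2 * Complex.sinh (l0 - l1 + η) * Complex.sinh (l1 - l0 + η) *
      (Complex.sinh (m1 - l0) * Complex.sinh (m0 - l1) *
        (Complex.sinh (m0 - l1 + η) * Complex.sinh (m1 - m0 + η) - κ * Complex.sinh (l1 - m0 + η) * Complex.sinh (m0 - m1 + η)) *
        (Complex.sinh (m1 - l0 + η) * Complex.sinh (m0 - m1 + η) - κ * Complex.sinh (l0 - m1 + η) * Complex.sinh (m1 - m0 + η))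
      - Complex.sinh (m0 - l0) * Complex.sinh (m1 - l1) *
        (Complex.sinh (m1 - l1 + η) * Complex.sinh (m0 - m1 + η) - κ * Complex.sinh (l1 - m1 + η) * Complex.sinh (m1 - m0 + η)) *
        (Complex.sinh (m0 - l0 + η) * Complex.sinh (m1 - m0 + η) - κ * Complex.sinh (l0 - m0 + η) * Complex.sinh (m0 - m1 + η))) := by
  have e0 := Complex.exp_ne_zero l0
  have e1 := Complex.exp_ne_zero l1
  have e2 := Complex.exp_ne_zero m0
  have e3 := Complex.exp_ne_zero m1
  have e4 := Complex.exp_ne_zero η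
  simp only [sinh_eq', Complex.exp_neg, Complex.exp_add, Complex.exp_sub]
  field_simp
  ring

set_option maxHeartbeats 2000000 in
theorem det_identity_N2 (η κ : ℂ) (lam mu : Fin 2 → ℂ)
    (h1 : ∀ j k : Fin 2, Complex.sinh (lam j - mu k) ≠ 0 ∧
      Complex.sinh (lam j - mu k + η) ≠ 0 ∧ Complex.sinh (lam j - mu k - η) ≠ 0)
    (h2 : Complex.sinh (lam 0 - lam 1 + η) ≠ 0)
    (h3 : Complex.sinh (lam 0 - lam 1 - η) ≠ 0)
    (h4 : Complex.sinh (mu 0 - mu 1 + η) ≠ 0)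
    (h5 : Complex.sinh (mu 0 - mu 1 - η) ≠ 0) :
    Matrix.det (Matrix.of fun j k : Fin 2 =>
        tfun η (mu k) (lam j) * (∏ a : Fin 2, hfun η (mu a) (lam j))
          + κ * tfun η (lam j) (mu k) * (∏ a : Fin 2, hfun η (lam j) (mu a)) *
            (∏ a : Fin 2, hfun η (lam a) (lam j) / hfun η (lam j) (lam a)))
      = Matrix.det (Matrix.of fun j k : Fin 2 =>
        tfun η (mu k) (lam j) * (∏ a : Fin 2, hfun η (mu k) (lam a))
          + κ * tfun η (lam j) (mu k) * (∏ a : Fin 2, hfun η (lam a) (mu k)) *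
            (∏ a : Fin 2, hfun η (mu k) (mu a) / hfun η (mu a) (mu k))) := by
  by_cases hη : Complex.sinh η = 0
  · simp [Matrix.det_fin_two, tfun, hη]
  · obtain ⟨a00, b00, c00⟩ := h1 0 0
    obtain ⟨a01, b01, c01⟩ := h1 0 1
    obtain ⟨a10, b10, c10⟩ := h1 1 0
    obtain ⟨a11, b11, c11⟩ := h1 1 1
    have n00 : Complex.sinh (mu 0 - lam 0) ≠ 0 := by
      rw [show mu 0 - lam 0 = -(lam 0 - mu 0) by ring, Complex.sinh_neg]; simpa using a00
    have n01 : Complex.sinh (mu 1 - lam 0) ≠ 0 := by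
      rw [show mu 1 - lam 0 = -(lam 0 - mu 1) by ring, Complex.sinh_neg]; simpa using a01
    have n10 : Complex.sinh (mu 0 - lam 1) ≠ 0 := by
      rw [show mu 0 - lam 1 = -(lam 1 - mu 0) by ring, Complex.sinh_neg]; simpa using a10
    have n11 : Complex.sinh (mu 1 - lam 1) ≠ 0 := by
      rw [show mu 1 - lam 1 = -(lam 1 - mu 1) by ring, Complex.sinh_neg]; simpa using a11
    have p00 : Complex.sinh (mu 0 - lam 0 + η) ≠ 0 := by
      rw [show mu 0 - lam 0 + η = -(lam 0 - mu 0 - η) by ring, Complex.sinh_neg]; simpa using c00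
    have p01 : Complex.sinh (mu 1 - lam 0 + η) ≠ 0 := by
      rw [show mu 1 - lam 0 + η = -(lam 0 - mu 1 - η) by ring, Complex.sinh_neg]; simpa using c01
    have p10 : Complex.sinh (mu 0 - lam 1 + η) ≠ 0 := by
      rw [show mu 0 - lam 1 + η = -(lam 1 - mu 0 - η) by ring, Complex.sinh_neg]; simpa using c10
    have p11 : Complex.sinh (mu 1 - lam 1 + η) ≠ 0 := by
      rw [show mu 1 - lam 1 + η = -(lam 1 - mu 1 - η) by ring, Complex.sinh_neg]; simpa using c11
    have hl10 : Complex.sinh (lam 1 - lam 0 + η) ≠ 0 := by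
      rw [show lam 1 - lam 0 + η = -(lam 0 - lam 1 - η) by ring, Complex.sinh_neg]; simpa using h3
    have hm10 : Complex.sinh (mu 1 - mu 0 + η) ≠ 0 := by
      rw [show mu 1 - mu 0 + η = -(mu 0 - mu 1 - η) by ring, Complex.sinh_neg]; simpa using h5
    have hPQ := key1 η κ (lam 0) (lam 1) (mu 0) (mu 1)
    simp only [Matrix.det_fin_two, Matrix.of_apply, tfun, hfun, Fin.prod_univ_two,
      sub_self, zero_add]
    rw [show Complex.sinh (lam 0 - mu 0) = -Complex.sinh (mu 0 - lam 0) by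
          rw [← Complex.sinh_neg, neg_sub],
        show Complex.sinh (lam 0 - mu 1) = -Complex.sinh (mu 1 - lam 0) by
          rw [← Complex.sinh_neg, neg_sub],
        show Complex.sinh (lam 1 - mu 0) = -Complex.sinh (mu 0 - lam 1) by
          rw [← Complex.sinh_neg, neg_sub],
        show Complex.sinh (lam 1 - mu 1) = -Complex.sinh (mu 1 - lam 1) by
          rw [← Complex.sinh_neg, neg_sub]]
    set S := Complex.sinh η with hS
    set N00 := Complex.sinh (mu 0 - lam 0) with hN00
    set N01 := Complex.sinh (mu 1 - lam 0) with hN01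
    set N10 := Complex.sinh (mu 0 - lam 1) with hN10
    set N11 := Complex.sinh (mu 1 - lam 1) with hN11
    set P00 := Complex.sinh (mu 0 - lam 0 + η) with hP00
    set P01 := Complex.sinh (mu 1 - lam 0 + η) with hP01
    set P10 := Complex.sinh (mu 0 - lam 1 + η) with hP10
    set P11 := Complex.sinh (mu 1 - lam 1 + η) with hP11
    set B00 := Complex.sinh (lam 0 - mu 0 + η) with hB00
    set B01 := Complex.sinh (lam 0 - mu 1 + η) with hB01
    set B10 := Complex.sinh (lam 1 - mu 0 + η) with hB10
    set B11 := Complex.sinh (lam 1 - mu 1 + η) with hB11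
    set L01 := Complex.sinh (lam 0 - lam 1 + η) with hL01
    set L10 := Complex.sinh (lam 1 - lam 0 + η) with hL10
    set M01 := Complex.sinh (mu 0 - mu 1 + η) with hM01
    set M10 := Complex.sinh (mu 1 - mu 0 + η) with hM10
    clear_value S N00 N01 N10 N11 P00 P01 P10 P11 B00 B01 B10 B11 L01 L10 M01 M10
    clear hS hN00 hN01 hN10 hN11 hP00 hP01 hP10 hP11 hB00 hB01 hB10 hB11 hL01 hL10 hM01 hM10
      h1 h3 h5 a00 a01 a10 a11 c00 c01 c10 c11
    trans ((S ^ 2 * M01 * M10 *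
      (N01 * N10 * (P01 * L01 - κ * B01 * L10) * (P10 * L10 - κ * B10 * L01)
      - N00 * N11 * (P00 * L01 - κ * B00 * L10) * (P11 * L10 - κ * B11 * L01))) /
      (N00 * N01 * N10 * N11 * L01 * L10 * M01 * M10))
    · field_simp [hη, n00, n01, n10, n11, p00, p01, p10, p11, b00, b01, b10, b11, h2, hl10, h4, hm10]
      have d1 : N00 * P00 * (N00 * B00 * L01) * (N11 * P11 * (N11 * B11 * L10)) ≠ 0 := by
        apply_rules [mul_ne_zero]
      have d2 : N01 * P01 * (N01 * B01 * L01) * (N10 * P10 * (N10 * B10 * L10)) ≠ 0 := by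
        apply_rules [mul_ne_zero]
      have d3 : N00 * N01 * N10 * N11 * L01 * L10 * M01 * M10 ≠ 0 := by
        apply_rules [mul_ne_zero]
      ring
    · rw [hPQ]
      symm
      field_simp [hη, n00, n01, n10, n11, p00, p01, p10, p11, b00, b01, b10, b11, h2, hl10, h4, hm10]
      have d1 : N00 * P00 * (N00 * B00 * M10) * (N11 * P11 * (N11 * B11 * M01)) ≠ 0 := by
        apply_rules [mul_ne_zero]
      have d2 : N01 * P01 * (N01 * B01 * M01) * (N10 * P10 * (N10 * B10 * M10)) ≠ 0 := by
        apply_rules [mul_ne_zero]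
      have d3 : N00 * N01 * N10 * N11 * L01 * L10 * M01 * M10 ≠ 0 := by
        apply_rules [mul_ne_zero]
      ring
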